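/- Let α_{k+1}, …, α_j be exchangeable real-valued random variables (nonconformity scores) and U_j be uniform on (0,1) independent of them. Define the randomized p-value p_j = (#{i : α_i > α_j} + U_j·#{i : α_i = α_j})/(j−k). Then p_j is uniformly distributed on (0,1). -/

import Mathlib

open MeasureTheory ProbabilityTheory
open Finset

/-- Telescoping sum over a finset of reals. -/
lemma telescope_aux (g : ℝ → ℝ) (w : ℝ → ℝ) (V : Finset ℝ) :
    ∑ v ∈ V, (g (∑ u ∈ V.filter (fun u => v ≤ u), w u)
        - g (∑ u ∈ V.filter (fun u => v < u), w u))
      = g (∑ u ∈ V, w u) - g 0 := by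
  induction V using Finset.strongInduction with
  | _ V ih =>
    rcases V.eq_empty_or_nonempty with rfl | hne
    · simp
    · set v0 := V.min' hne with hv0
      have hv0m : v0 ∈ V := V.min'_mem hne
      have hVe : V.erase v0 ⊂ V := Finset.erase_ssubset hv0m
      rw [← Finset.sum_erase_add V _ hv0m]
      have h1 : V.filter (fun u => v0 ≤ u) = V :=
        Finset.filter_true_of_mem fun u hu => V.min'_le u hu
      have h2 : V.filter (fun u => v0 < u) = V.erase v0 := by
        ext u
        simp only [Finset.mem_filter, Finset.mem_erase]
        constructor
        · rintro ⟨hu, hlt⟩; exact ⟨ne_of_gt hlt, hu⟩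
        · rintro ⟨hne', hu⟩; exact ⟨hu, lt_of_le_of_ne (V.min'_le u hu) (Ne.symm hne')⟩
      have hcongr : ∀ v ∈ V.erase v0,
          (g (∑ u ∈ V.filter (fun u => v ≤ u), w u)
            - g (∑ u ∈ V.filter (fun u => v < u), w u))
          = (g (∑ u ∈ (V.erase v0).filter (fun u => v ≤ u), w u)
            - g (∑ u ∈ (V.erase v0).filter (fun u => v < u), w u)) := by
        intro v hv
        have hv0v : v0 < v := by
          rcases Finset.mem_erase.mp hv with ⟨hne', hvV⟩
          exact lt_of_le_of_ne (V.min'_le v hvV) (Ne.symm hne')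
        have e1 : V.filter (fun u => v ≤ u) = (V.erase v0).filter (fun u => v ≤ u) := by
          ext u
          simp only [Finset.mem_filter, Finset.mem_erase]
          constructor
          · rintro ⟨hu, hle⟩
            exact ⟨⟨by rintro rfl; exact absurd hle (not_le.mpr hv0v), hu⟩, hle⟩
          · rintro ⟨⟨_, hu⟩, hle⟩; exact ⟨hu, hle⟩
        have e2 : V.filter (fun u => v < u) = (V.erase v0).filter (fun u => v < u) := by
          ext u
          simp only [Finset.mem_filter, Finset.mem_erase]
          constructor
          · rintro ⟨hu, hlt⟩
            exact ⟨⟨by rintro rfl; exact absurd hlt (not_lt.mpr hv0v.le), hu⟩, hlt⟩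
          · rintro ⟨⟨_, hu⟩, hlt⟩; exact ⟨hu, hlt⟩
        rw [e1, e2]
      rw [Finset.sum_congr rfl hcongr, ih _ hVe]
      simp only [h1, h2]
      rw [← Finset.sum_erase_add V w hv0m]
      ring

lemma count_fiberwise {n : ℕ} (a : Fin n → ℝ) (q : ℝ → Prop) [DecidablePred q] :
    ((univ.filter fun i => q (a i)).card : ℝ)
      = ∑ u ∈ (Finset.image a univ).filter q,
          ((univ.filter fun i => a i = u).card : ℝ) := by
  have h := Finset.card_eq_sum_card_fiberwise
    (f := a) (s := univ.filter fun i => q (a i)) (t := (Finset.image a univ).filter q)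
    (fun i hi => by
      simp only [Finset.mem_coe, Finset.mem_filter, Finset.mem_univ, true_and] at hi ⊢
      exact ⟨Finset.mem_image_of_mem a (Finset.mem_univ i), hi⟩)
  rw [h]
  push_cast
  refine Finset.sum_congr rfl fun u hu => ?_
  have hq : q u := (Finset.mem_filter.mp hu).2
  have hset : ((univ.filter fun i => q (a i)).filter fun i => a i = u)
      = univ.filter fun i => a i = u := by
    rw [Finset.filter_filter]
    ext i
    simp only [Finset.mem_filter, Finset.mem_univ, true_and]
    constructor
    · rintro ⟨_, h⟩; exact h
    · intro h; exact ⟨by rw [h]; exact hq, h⟩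
  rw [hset]

lemma mul_clamp_eq (x G T : ℝ) (hx : 0 ≤ x) (hT : 0 < T) :
    T * min (max ((x - G) / T) 0) 1 = min x (G + T) - min x G := by
  rcases le_total x G with h | h
  · have h1 : (x - G)/T ≤ 0 := div_nonpos_of_nonpos_of_nonneg (by linarith) hT.le
    rw [max_eq_right h1, min_eq_left (by norm_num : (0:ℝ) ≤ 1),
      min_eq_left (by linarith), min_eq_left h]
    ring
  · have h1 : (0:ℝ) ≤ (x - G)/T := div_nonneg (by linarith) hT.le
    rw [max_eq_left h1, min_eq_right h]
    rcases le_total x (G + T) with h2 | h2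
    · rw [min_eq_left ((div_le_one hT).mpr (by linarith)), min_eq_left h2]
      field_simp
    · rw [min_eq_right ((one_le_div hT).mpr (by linarith)), min_eq_right h2]
      ring

lemma sum_clamp (m : ℕ) (a : Fin (m + 1) → ℝ) (x : ℝ) (hx0 : 0 ≤ x)
    (hxn : x ≤ (m : ℝ) + 1) :
    ∑ j : Fin (m + 1),
      min (max ((x - ((univ.filter fun i => a j < a i).card : ℝ)) /
        ((univ.filter fun i => a i = a j).card : ℝ)) 0) 1 = x := by
  classical
  set V := Finset.image a univ with hV
  set Neq : ℝ → ℝ := fun v => ((univ.filter fun i => a i = v).card : ℝ) with hNeq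
  set Ngt : ℝ → ℝ := fun v => ((univ.filter fun i => v < a i).card : ℝ) with hNgt
  set h : ℝ → ℝ := fun v => min (max ((x - Ngt v) / Neq v) 0) 1 with hh
  have step1 : ∑ j : Fin (m+1),
      min (max ((x - ((univ.filter fun i => a j < a i).card : ℝ)) /
        ((univ.filter fun i => a i = a j).card : ℝ)) 0) 1 = ∑ j : Fin (m+1), h (a j) := rfl
  rw [step1, Finset.sum_comp h a]
  have hterm : ∀ v ∈ V, ((univ.filter fun j => a j = v).card) • h v
      = min x (∑ u ∈ V.filter (fun u => v ≤ u), Neq u)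
        - min x (∑ u ∈ V.filter (fun u => v < u), Neq u) := by
    intro v hv
    have hpos : 0 < Neq v := by
      have : v ∈ Finset.image a univ := hv
      rcases Finset.mem_image.mp this with ⟨i, _, rfl⟩
      have : i ∈ univ.filter fun j => a j = a i := by simp
      have hc : 0 < (univ.filter fun j => a j = a i).card := Finset.card_pos.mpr ⟨i, this⟩
      show (0:ℝ) < ((univ.filter fun j => a j = a i).card : ℝ)
      exact_mod_cast hc
    have hge : Ngt v + Neq v = ∑ u ∈ V.filter (fun u => v ≤ u), Neq u := by
      have h1 : ((univ.filter fun i => v ≤ a i).card : ℝ)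
          = ∑ u ∈ V.filter (fun u => v ≤ u), Neq u := count_fiberwise a (fun u => v ≤ u)
      rw [← h1, hNgt, hNeq]
      have : (univ.filter fun i => v ≤ a i)
          = (univ.filter fun i => v < a i) ∪ (univ.filter fun i => a i = v) := by
        rw [← Finset.filter_or]
        exact Finset.filter_congr fun i _ => by
          constructor
          · intro hle
            rcases lt_or_eq_of_le hle with h' | h'
            · exact Or.inl h'
            · exact Or.inr h'.symm
          · rintro (h' | h')
            · exact h'.le
            · exact h'.ge
      rw [this, Finset.card_union_of_disjoint]
      · push_cast; ring
      · rw [Finset.disjoint_filter]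
        intro i _ hlt heq
        exact absurd heq.symm (ne_of_lt hlt)
    have hgt : Ngt v = ∑ u ∈ V.filter (fun u => v < u), Neq u :=
      count_fiberwise a (fun u => v < u)
    have hcard : ((univ.filter fun j => a j = v).card : ℝ) = Neq v := rfl
    rw [nsmul_eq_mul, hcard, hh]
    simp only
    rw [mul_clamp_eq x (Ngt v) (Neq v) hx0 hpos, ← hgt, ← hge]
  rw [Finset.sum_congr rfl hterm, telescope_aux (fun y => min x y) Neq V]
  have htot : ∑ u ∈ V, Neq u = (m : ℝ) + 1 := by
    have := count_fiberwise a (fun _ => True)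
    simp only [Finset.filter_true, Finset.filter_true_of_mem (fun _ _ => trivial)] at this
    rw [← this]
    simp [Finset.card_univ]
  simp only [htot]
  rw [min_eq_left hxn, min_eq_right hx0]
  ring

noncomputable section ConformalAux

def cgtR {n : ℕ} (j : Fin n) (a : Fin n → ℝ) : ℝ :=
  ((univ.filter fun i => a j < a i).card : ℝ)

def ceqR {n : ℕ} (j : Fin n) (a : Fin n → ℝ) : ℝ :=
  ((univ.filter fun i => a i = a j).card : ℝ)

lemma meas_cgtR {n : ℕ} (j : Fin n) : Measurable fun a : Fin n → ℝ => cgtR j a := by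
  have h : ∀ a : Fin n → ℝ, cgtR j a = ∑ i : Fin n, if a j < a i then (1:ℝ) else 0 := by
    intro a
    rw [cgtR, Finset.card_filter]
    push_cast
    exact Finset.sum_congr rfl fun i _ => by split <;> norm_num
  simp only [h]
  exact Finset.measurable_sum _ fun i _ =>
    Measurable.ite (measurableSet_lt (measurable_pi_apply j) (measurable_pi_apply i))
      measurable_const measurable_const

lemma meas_ceqR {n : ℕ} (j : Fin n) : Measurable fun a : Fin n → ℝ => ceqR j a := by
  have h : ∀ a : Fin n → ℝ, ceqR j a = ∑ i : Fin n, if a i = a j then (1:ℝ) else 0 := by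
    intro a
    rw [ceqR, Finset.card_filter]
    push_cast
    exact Finset.sum_congr rfl fun i _ => by split <;> norm_num
  simp only [h]
  exact Finset.measurable_sum _ fun i _ =>
    Measurable.ite (measurableSet_eq_fun (measurable_pi_apply i) (measurable_pi_apply j))
      measurable_const measurable_const

lemma ceqR_pos {n : ℕ} (j : Fin n) (a : Fin n → ℝ) : 1 ≤ ceqR j a := by
  rw [ceqR]
  have : j ∈ univ.filter fun i => a i = a j := by simp
  have hc : 1 ≤ (univ.filter fun i => a i = a j).card := Finset.card_pos.mpr ⟨j, this⟩
  exact_mod_cast hc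

lemma cgtR_nonneg {n : ℕ} (j : Fin n) (a : Fin n → ℝ) : 0 ≤ cgtR j a := by
  rw [cgtR]; positivity

lemma cgtR_add_ceqR_le {n : ℕ} (j : Fin n) (a : Fin n → ℝ) : cgtR j a + ceqR j a ≤ n := by
  rw [cgtR, ceqR]
  have hdisj : Disjoint (univ.filter fun i => a j < a i) (univ.filter fun i => a i = a j) := by
    rw [Finset.disjoint_filter]
    intro i _ hlt heq
    exact absurd heq.symm (ne_of_lt hlt)
  have h := Finset.card_union_of_disjoint hdisj
  have hle : ((univ.filter fun i => a j < a i) ∪ (univ.filter fun i => a i = a j)).card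
      ≤ (univ : Finset (Fin n)).card := Finset.card_le_card (Finset.subset_univ _)
  rw [h, Finset.card_univ, Fintype.card_fin] at hle
  exact_mod_cast hle

lemma card_filter_perm {n : ℕ} (σ : Equiv.Perm (Fin n)) (P : Fin n → Prop) [DecidablePred P] :
    (univ.filter fun i => P (σ i)).card = (univ.filter P).card := by
  apply Finset.card_bij (fun i _ => σ i)
  · intro i hi
    simp only [Finset.mem_filter, Finset.mem_univ, true_and] at hi ⊢
    exact hi
  · intro i _ i' _ h
    exact σ.injective h
  · intro b hb
    refine ⟨σ.symm b, ?_, σ.apply_symm_apply b⟩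
    simp only [Finset.mem_filter, Finset.mem_univ, true_and] at hb ⊢
    rw [σ.apply_symm_apply]
    exact hb

lemma cgtR_comp {n : ℕ} (σ : Equiv.Perm (Fin n)) (j : Fin n) (a : Fin n → ℝ) :
    cgtR j (fun i => a (σ i)) = cgtR (σ j) a := by
  rw [cgtR, cgtR]
  norm_cast
  exact card_filter_perm σ (fun i => a (σ j) < a i)

lemma ceqR_comp {n : ℕ} (σ : Equiv.Perm (Fin n)) (j : Fin n) (a : Fin n → ℝ) :
    ceqR j (fun i => a (σ i)) = ceqR (σ j) a := by
  rw [ceqR, ceqR]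
  norm_cast
  exact card_filter_perm σ (fun i => a i = a (σ j))

lemma uniform_Iic (y : ℝ) :
    volume.restrict (Set.Ioo (0:ℝ) 1) (Set.Iic y) = ENNReal.ofReal (min y 1) := by
  rw [Measure.restrict_apply measurableSet_Iic]
  rcases le_or_gt 1 y with h | h
  · have hs : Set.Iic y ∩ Set.Ioo 0 1 = Set.Ioo 0 1 :=
      Set.inter_eq_self_of_subset_right fun u hu => le_trans hu.2.le h
    rw [hs, Real.volume_Ioo, min_eq_right h]
    norm_num
  · have hs : Set.Iic y ∩ Set.Ioo 0 1 = Set.Ioc 0 y := by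
      ext u
      simp only [Set.mem_inter_iff, Set.mem_Iic, Set.mem_Ioo, Set.mem_Ioc]
      constructor
      · rintro ⟨h1, h2, _⟩; exact ⟨h2, h1⟩
      · rintro ⟨h1, h2⟩; exact ⟨h2, h1, lt_of_le_of_lt h2 h⟩
    rw [hs, Real.volume_Ioc, min_eq_left h.le]
    norm_num

lemma ofReal_min_one_eq (y : ℝ) :
    ENNReal.ofReal (min y 1) = ENNReal.ofReal (min (max y 0) 1) := by
  rcases le_total 0 y with h | h
  · rw [max_eq_left h]
  · rw [max_eq_right h, min_eq_left (by norm_num : (0:ℝ) ≤ 1),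
      min_eq_left (by linarith : y ≤ 1), ENNReal.ofReal_zero,
      ENNReal.ofReal_eq_zero]
    exact h

end ConformalAux


/-- Validity of randomized conformal p-values: if the nonconformity scores
`α 0, …, α m` are exchangeable and `U` is uniform on `(0,1)` and independent of
them, then the smoothed p-value
`p = (#{i : α i > α m} + U · #{i : α i = α m}) / (m + 1)`
is uniformly distributed on `(0,1)`. -/
theorem conformal_pvalue_uniform
    {Ω : Type*} [MeasurableSpace Ω] (μ : Measure Ω) [IsProbabilityMeasure μ]
    (m : ℕ) (α : Fin (m + 1) → Ω → ℝ) (hαmeas : ∀ i, Measurable (α i))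
    (hexch : ∀ σ : Equiv.Perm (Fin (m + 1)),
      Measure.map (fun ω i => α (σ i) ω) μ = Measure.map (fun ω i => α i ω) μ)
    (U : Ω → ℝ) (hUmeas : Measurable U)
    (hU : Measure.map U μ = volume.restrict (Set.Ioo (0 : ℝ) 1))
    (hindep : IndepFun U (fun ω i => α i ω) μ)
    (p : Ω → ℝ)
    (hp : ∀ ω, p ω =
      (((Finset.univ.filter fun i => α (Fin.last m) ω < α i ω).card : ℝ) +
        U ω * ((Finset.univ.filter fun i => α i ω = α (Fin.last m) ω).card : ℝ)) /
        (m + 1)) :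
    Measure.map p μ = volume.restrict (Set.Ioo (0 : ℝ) 1) := by
  classical
  set A : Ω → Fin (m + 1) → ℝ := fun ω i => α i ω with hA
  have hAm : Measurable A := measurable_pi_lambda _ hαmeas
  set ν := μ.map A with hν
  haveI : IsProbabilityMeasure ν := Measure.isProbabilityMeasure_map hAm.aemeasurable
  have hpm : Measurable p := by
    have hpe : p = fun ω => (cgtR (Fin.last m) (A ω) + U ω * ceqR (Fin.last m) (A ω)) /
        ((m : ℝ) + 1) := funext fun ω => hp ω
    rw [hpe]
    exact (((meas_cgtR _).comp hAm).add
      (hUmeas.mul ((meas_ceqR _).comp hAm))).div_const _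
  haveI : IsProbabilityMeasure (μ.map p) := Measure.isProbabilityMeasure_map hpm.aemeasurable
  haveI : IsFiniteMeasure (volume.restrict (Set.Ioo (0:ℝ) 1)) := by
    constructor
    rw [Measure.restrict_apply_univ, Real.volume_Ioo]
    norm_num
  -- key CDF computation
  have key : ∀ t : ℝ, (μ.map p) (Set.Iic t)
      = ∫⁻ a, ENNReal.ofReal
          (min ((t * ((m:ℝ) + 1) - cgtR (Fin.last m) a) / ceqR (Fin.last m) a) 1) ∂ν := by
    intro t
    set S : Set (ℝ × (Fin (m + 1) → ℝ)) :=
      {q | cgtR (Fin.last m) q.2 + q.1 * ceqR (Fin.last m) q.2 ≤ t * ((m:ℝ) + 1)} with hS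
    have hSm : MeasurableSet S :=
      measurableSet_le (((meas_cgtR _).comp measurable_snd).add
        (measurable_fst.mul ((meas_ceqR _).comp measurable_snd))) measurable_const
    have hset : p ⁻¹' Set.Iic t = (fun ω => (U ω, A ω)) ⁻¹' S := by
      ext ω
      simp only [Set.mem_preimage, Set.mem_Iic, hS, Set.mem_setOf_eq]
      rw [hp ω]
      exact div_le_iff₀ (by positivity)
    rw [Measure.map_apply hpm measurableSet_Iic, hset,
      ← Measure.map_apply (hUmeas.prodMk hAm) hSm,
      (indepFun_iff_map_prod_eq_prod_map_map hUmeas.aemeasurable hAm.aemeasurable).mp hindep,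
      Measure.prod_apply_symm hSm]
    refine lintegral_congr fun a => ?_
    have hTpos : (0:ℝ) < ceqR (Fin.last m) a := lt_of_lt_of_le one_pos (ceqR_pos _ a)
    have hslice : (fun u => (u, a)) ⁻¹' S
        = Set.Iic ((t * ((m:ℝ) + 1) - cgtR (Fin.last m) a) / ceqR (Fin.last m) a) := by
      ext u
      simp only [Set.mem_preimage, hS, Set.mem_setOf_eq, Set.mem_Iic]
      rw [le_div_iff₀ hTpos]
      constructor <;> intro h <;> nlinarith
    rw [hslice, hU, uniform_Iic]
  -- conclude by CDF matching
  refine MeasureTheory.Measure.ext_of_Iic (μ.map p) _ fun t => ?_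
  rw [key t, uniform_Iic t]
  rcases le_or_gt t 0 with ht0 | ht0
  · have hz : ∀ a : Fin (m+1) → ℝ, ENNReal.ofReal
        (min ((t * ((m:ℝ) + 1) - cgtR (Fin.last m) a) / ceqR (Fin.last m) a) 1) = 0 := by
      intro a
      have hTpos : (0:ℝ) < ceqR (Fin.last m) a := lt_of_lt_of_le one_pos (ceqR_pos _ a)
      have hnum : t * ((m:ℝ) + 1) - cgtR (Fin.last m) a ≤ 0 := by
        have h1 : t * ((m:ℝ) + 1) ≤ 0 := mul_nonpos_of_nonpos_of_nonneg ht0 (by positivity)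
        have h2 := cgtR_nonneg (Fin.last m) a
        linarith
      have hy : (t * ((m:ℝ) + 1) - cgtR (Fin.last m) a) / ceqR (Fin.last m) a ≤ 0 :=
        div_nonpos_of_nonpos_of_nonneg hnum hTpos.le
      rw [ENNReal.ofReal_eq_zero]
      exact le_trans (min_le_left _ _) hy
    rw [lintegral_congr hz, lintegral_zero, ENNReal.ofReal_eq_zero.mpr]
    exact le_trans (min_le_left _ _) ht0
  rcases le_or_gt 1 t with ht1 | ht1
  · have ho : ∀ a : Fin (m+1) → ℝ, ENNReal.ofReal
        (min ((t * ((m:ℝ) + 1) - cgtR (Fin.last m) a) / ceqR (Fin.last m) a) 1) = 1 := by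
      intro a
      have hTpos : (0:ℝ) < ceqR (Fin.last m) a := lt_of_lt_of_le one_pos (ceqR_pos _ a)
      have hge : (1:ℝ) ≤ (t * ((m:ℝ) + 1) - cgtR (Fin.last m) a) / ceqR (Fin.last m) a := by
        rw [le_div_iff₀ hTpos]
        have h1 := cgtR_add_ceqR_le (Fin.last m) a
        have h2 : ((m:ℝ) + 1) ≤ t * ((m:ℝ) + 1) := le_mul_of_one_le_left (by positivity) ht1
        push_cast at h1
        nlinarith
      rw [min_eq_right hge, ENNReal.ofReal_one]
    rw [lintegral_congr ho, lintegral_one, measure_univ, min_eq_right ht1,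
      ENNReal.ofReal_one]
  -- main case 0 < t < 1
  · set c : ℝ := t * ((m:ℝ) + 1) with hc
    set F : Fin (m + 1) → (Fin (m + 1) → ℝ) → ENNReal := fun j a =>
      ENNReal.ofReal (min ((c - cgtR j a) / ceqR j a) 1) with hF
    have hFmeas : ∀ j, Measurable (F j) := fun j =>
      ENNReal.measurable_ofReal.comp
        (((measurable_const.sub (meas_cgtR j)).div (meas_ceqR j)).min measurable_const)
    have hswap : ∀ j : Fin (m + 1), ∫⁻ a, F (Fin.last m) a ∂ν = ∫⁻ a, F j a ∂ν := by
      intro j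
      set σ : Equiv.Perm (Fin (m + 1)) := Equiv.swap (Fin.last m) j with hσ
      have hr : Measurable fun (a : Fin (m + 1) → ℝ) => (fun i => a (σ i)) :=
        measurable_pi_lambda _ fun i => measurable_pi_apply (σ i)
      have hmap : ν.map (fun a => fun i => a (σ i)) = ν := by
        rw [hν, Measure.map_map hr hAm]
        exact hexch σ
      calc ∫⁻ a, F (Fin.last m) a ∂ν
          = ∫⁻ a, F (Fin.last m) a ∂(ν.map (fun a => fun i => a (σ i))) := by rw [hmap]
        _ = ∫⁻ a, F (Fin.last m) (fun i => a (σ i)) ∂ν := lintegral_map (hFmeas _) hr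
        _ = ∫⁻ a, F j a ∂ν := by
            refine lintegral_congr fun a => ?_
            rw [hF]
            simp only
            rw [cgtR_comp, ceqR_comp, hσ, Equiv.swap_apply_left]
    have hsum : ∀ a : Fin (m + 1) → ℝ, ∑ j : Fin (m + 1), F j a = ENNReal.ofReal c := by
      intro a
      have h1 : ∀ j : Fin (m + 1), F j a
          = ENNReal.ofReal (min (max ((c - cgtR j a) / ceqR j a) 0) 1) := fun j =>
        ofReal_min_one_eq _
      have h2 : ∑ j : Fin (m + 1), min (max ((c - cgtR j a) / ceqR j a) 0) 1 = c := by
        have := sum_clamp m a c (by positivity) (by nlinarith)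
        convert this using 2
        rfl
      calc ∑ j : Fin (m + 1), F j a
          = ∑ j : Fin (m + 1), ENNReal.ofReal (min (max ((c - cgtR j a) / ceqR j a) 0) 1) :=
            Finset.sum_congr rfl fun j _ => h1 j
        _ = ENNReal.ofReal (∑ j : Fin (m + 1), min (max ((c - cgtR j a) / ceqR j a) 0) 1) :=
            (ENNReal.ofReal_sum_of_nonneg fun j _ => le_min (le_max_right _ _) zero_le_one).symm
        _ = ENNReal.ofReal c := by rw [h2]
    have hmul : ((m : ENNReal) + 1) * ∫⁻ a, F (Fin.last m) a ∂ν = ENNReal.ofReal c := by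
      calc ((m : ENNReal) + 1) * ∫⁻ a, F (Fin.last m) a ∂ν
          = ∑ _j : Fin (m + 1), ∫⁻ a, F (Fin.last m) a ∂ν := by
            rw [Finset.sum_const, Finset.card_univ, Fintype.card_fin, nsmul_eq_mul]
            push_cast
            ring
        _ = ∑ j : Fin (m + 1), ∫⁻ a, F j a ∂ν := Finset.sum_congr rfl fun j _ => hswap j
        _ = ∫⁻ a, ∑ j : Fin (m + 1), F j a ∂ν :=
            (lintegral_finset_sum _ fun j _ => hFmeas j).symm
        _ = ∫⁻ _a, ENNReal.ofReal c ∂ν := lintegral_congr hsum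
        _ = ENNReal.ofReal c := by rw [lintegral_const, measure_univ, mul_one]
    have hofc : ENNReal.ofReal c = ((m : ENNReal) + 1) * ENNReal.ofReal t := by
      rw [hc, mul_comm t, ENNReal.ofReal_mul (by positivity : (0:ℝ) ≤ (m:ℝ)+1)]
      congr 1
      rw [ENNReal.ofReal_add (by positivity) zero_le_one]
      norm_num [ENNReal.ofReal_natCast]
    rw [hofc] at hmul
    have hne0 : ((m : ENNReal) + 1) ≠ 0 := by simp
    have hnetop : ((m : ENNReal) + 1) ≠ ⊤ := by simp [ENNReal.add_ne_top]
    have := (ENNReal.mul_right_inj hne0 hnetop).mp hmul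
    rw [min_eq_left ht1.le]
    exact this
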